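/- The map R^ε_{α,β} of the multiparametric NLS lift (u₁ = (α₂/β₂)y₁ − ε²(α₁β₂−α₂β₁)x₁/[β₂(α₂β₂+ε²x₁y₂)], u₂ = y₂, v₁ = x₁, v₂ = (β₂/α₂)x₂ + ε²(α₁β₂−α₂β₁)y₂/[α₂(α₂β₂+ε²x₁y₂)]) is a Poisson map with respect to the bracket {x₁,x₂} = α₂, {y₁,y₂} = β₂, {xᵢ,yⱼ} = 0: one has {u₁,u₂} = α₂, {v₁,v₂} = β₂, and {uᵢ,vⱼ} = 0 for i,j ∈ {1,2}. -/

import Mathlib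

noncomputable def d1 (f : ℂ → ℂ → ℂ → ℂ → ℂ) (a b c d : ℂ) : ℂ :=
  deriv (fun t => f t b c d) a
noncomputable def d2 (f : ℂ → ℂ → ℂ → ℂ → ℂ) (a b c d : ℂ) : ℂ :=
  deriv (fun t => f a t c d) b
noncomputable def d3 (f : ℂ → ℂ → ℂ → ℂ → ℂ) (a b c d : ℂ) : ℂ :=
  deriv (fun t => f a b t d) c
noncomputable def d4 (f : ℂ → ℂ → ℂ → ℂ → ℂ) (a b c d : ℂ) : ℂ :=
  deriv (fun t => f a b c t) d

/-- Poisson bracket on ℂ⁴ (coords x₁,x₂,y₁,y₂) with `{x₁,x₂} = α₂`,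
`{y₁,y₂} = β₂`, `{xᵢ,yⱼ} = 0`. -/
noncomputable def pb (α₂ β₂ : ℂ) (f g : ℂ → ℂ → ℂ → ℂ → ℂ) (a b c d : ℂ) : ℂ :=
  α₂ * (d1 f a b c d * d2 g a b c d - d2 f a b c d * d1 g a b c d) +
  β₂ * (d3 f a b c d * d4 g a b c d - d4 f a b c d * d3 g a b c d)

/-- The multiparametric NLS lift `R^ε_{α,β}` is a Poisson map for the bracket
`{x₁,x₂} = α₂`, `{y₁,y₂} = β₂`, `{xᵢ,yⱼ} = 0`. -/
theorem NLS_lift_Poisson (ε α₁ α₂ β₁ β₂ : ℂ)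
    (hε : ε ≠ 0) (hα₂ : α₂ ≠ 0) (hβ₂ : β₂ ≠ 0)
    (u₁ u₂ v₁ v₂ : ℂ → ℂ → ℂ → ℂ → ℂ)
    (hu₁ : u₁ = fun x₁ _ y₁ y₂ => (α₂ / β₂) * y₁ -
      ε ^ 2 * (α₁ * β₂ - α₂ * β₁) * x₁ / (β₂ * (α₂ * β₂ + ε ^ 2 * x₁ * y₂)))
    (hu₂ : u₂ = fun _ _ _ y₂ => y₂)
    (hv₁ : v₁ = fun x₁ _ _ _ => x₁)
    (hv₂ : v₂ = fun x₁ x₂ _ y₂ => (β₂ / α₂) * x₂ +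
      ε ^ 2 * (α₁ * β₂ - α₂ * β₁) * y₂ / (α₂ * (α₂ * β₂ + ε ^ 2 * x₁ * y₂)))
    (x₁ x₂ y₁ y₂ : ℂ) (hD : α₂ * β₂ + ε ^ 2 * x₁ * y₂ ≠ 0) :
    pb α₂ β₂ u₁ u₂ x₁ x₂ y₁ y₂ = α₂ ∧
    pb α₂ β₂ v₁ v₂ x₁ x₂ y₁ y₂ = β₂ ∧
    pb α₂ β₂ u₁ v₁ x₁ x₂ y₁ y₂ = 0 ∧
    pb α₂ β₂ u₁ v₂ x₁ x₂ y₁ y₂ = 0 ∧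
    pb α₂ β₂ u₂ v₁ x₁ x₂ y₁ y₂ = 0 ∧
    pb α₂ β₂ u₂ v₂ x₁ x₂ y₁ y₂ = 0 := by
  have hdβ : β₂ * (α₂ * β₂ + ε ^ 2 * x₁ * y₂) ≠ 0 := mul_ne_zero hβ₂ hD
  have hdα : α₂ * (α₂ * β₂ + ε ^ 2 * x₁ * y₂) ≠ 0 := mul_ne_zero hα₂ hD
  -- partials of u₁
  have hd1u₁ : d1 u₁ x₁ x₂ y₁ y₂ =
      -(ε ^ 2 * (α₁ * β₂ - α₂ * β₁) * α₂) / (α₂ * β₂ + ε ^ 2 * x₁ * y₂) ^ 2 := by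
    rw [hu₁]; unfold d1
    have hden : HasDerivAt (fun t : ℂ => β₂ * (α₂ * β₂ + ε ^ 2 * t * y₂))
        (β₂ * (ε ^ 2 * 1 * y₂)) x₁ :=
      ((((hasDerivAt_id x₁).const_mul (ε ^ 2)).mul_const y₂).const_add (α₂ * β₂)).const_mul β₂
    have hnum : HasDerivAt (fun t : ℂ => ε ^ 2 * (α₁ * β₂ - α₂ * β₁) * t)
        (ε ^ 2 * (α₁ * β₂ - α₂ * β₁) * 1) x₁ := (hasDerivAt_id x₁).const_mul _
    erw [((hasDerivAt_const x₁ ((α₂ / β₂) * y₁)).sub (hnum.div hden hdβ)).deriv]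
    field_simp; ring
  have hd2u₁ : d2 u₁ x₁ x₂ y₁ y₂ = 0 := by rw [hu₁]; unfold d2; simp
  have hd3u₁ : d3 u₁ x₁ x₂ y₁ y₂ = α₂ / β₂ := by
    rw [hu₁]; unfold d3
    have h : HasDerivAt (fun t : ℂ => α₂ / β₂ * t -
        ε ^ 2 * (α₁ * β₂ - α₂ * β₁) * x₁ / (β₂ * (α₂ * β₂ + ε ^ 2 * x₁ * y₂))) (α₂ / β₂) y₁ := by
      simpa using ((hasDerivAt_id y₁).const_mul (α₂ / β₂)).sub_const
        (ε ^ 2 * (α₁ * β₂ - α₂ * β₁) * x₁ / (β₂ * (α₂ * β₂ + ε ^ 2 * x₁ * y₂)))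
    rw [h.deriv]
  have hd4u₁ : d4 u₁ x₁ x₂ y₁ y₂ =
      ε ^ 2 * (α₁ * β₂ - α₂ * β₁) * x₁ * (ε ^ 2 * x₁) /
        (β₂ * (α₂ * β₂ + ε ^ 2 * x₁ * y₂) ^ 2) := by
    rw [hu₁]; unfold d4
    have hden : HasDerivAt (fun t : ℂ => β₂ * (α₂ * β₂ + ε ^ 2 * x₁ * t))
        (β₂ * (ε ^ 2 * x₁ * 1)) y₂ :=
      (((hasDerivAt_id y₂).const_mul (ε ^ 2 * x₁)).const_add (α₂ * β₂)).const_mul β₂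
    have h := (hasDerivAt_const y₂ ((α₂ / β₂) * y₁)).sub
      ((hasDerivAt_const y₂ (ε ^ 2 * (α₁ * β₂ - α₂ * β₁) * x₁)).div hden hdβ)
    erw [h.deriv]
    field_simp; ring
  -- partials of u₂ and v₁
  have hd1u₂ : d1 u₂ x₁ x₂ y₁ y₂ = 0 := by rw [hu₂]; unfold d1; simp
  have hd2u₂ : d2 u₂ x₁ x₂ y₁ y₂ = 0 := by rw [hu₂]; unfold d2; simp
  have hd3u₂ : d3 u₂ x₁ x₂ y₁ y₂ = 0 := by rw [hu₂]; unfold d3; simp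
  have hd4u₂ : d4 u₂ x₁ x₂ y₁ y₂ = 1 := by rw [hu₂]; unfold d4; simp
  have hd1v₁ : d1 v₁ x₁ x₂ y₁ y₂ = 1 := by rw [hv₁]; unfold d1; simp
  have hd2v₁ : d2 v₁ x₁ x₂ y₁ y₂ = 0 := by rw [hv₁]; unfold d2; simp
  have hd3v₁ : d3 v₁ x₁ x₂ y₁ y₂ = 0 := by rw [hv₁]; unfold d3; simp
  have hd4v₁ : d4 v₁ x₁ x₂ y₁ y₂ = 0 := by rw [hv₁]; unfold d4; simp
  -- partials of v₂
  have hd1v₂ : d1 v₂ x₁ x₂ y₁ y₂ =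
      -(ε ^ 2 * (α₁ * β₂ - α₂ * β₁) * y₂ * (ε ^ 2 * y₂)) /
        (α₂ * (α₂ * β₂ + ε ^ 2 * x₁ * y₂) ^ 2) := by
    rw [hv₂]; unfold d1
    have hden : HasDerivAt (fun t : ℂ => α₂ * (α₂ * β₂ + ε ^ 2 * t * y₂))
        (α₂ * (ε ^ 2 * 1 * y₂)) x₁ :=
      ((((hasDerivAt_id x₁).const_mul (ε ^ 2)).mul_const y₂).const_add (α₂ * β₂)).const_mul α₂
    have h := (hasDerivAt_const x₁ ((β₂ / α₂) * x₂)).add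
      ((hasDerivAt_const x₁ (ε ^ 2 * (α₁ * β₂ - α₂ * β₁) * y₂)).div hden hdα)
    erw [h.deriv]
    field_simp; ring
  have hd2v₂ : d2 v₂ x₁ x₂ y₁ y₂ = β₂ / α₂ := by
    rw [hv₂]; unfold d2
    have h : HasDerivAt (fun t : ℂ => β₂ / α₂ * t +
        ε ^ 2 * (α₁ * β₂ - α₂ * β₁) * y₂ / (α₂ * (α₂ * β₂ + ε ^ 2 * x₁ * y₂))) (β₂ / α₂) x₂ := by
      simpa using ((hasDerivAt_id x₂).const_mul (β₂ / α₂)).add_const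
        (ε ^ 2 * (α₁ * β₂ - α₂ * β₁) * y₂ / (α₂ * (α₂ * β₂ + ε ^ 2 * x₁ * y₂)))
    rw [h.deriv]
  have hd3v₂ : d3 v₂ x₁ x₂ y₁ y₂ = 0 := by rw [hv₂]; unfold d3; simp
  have hd4v₂ : d4 v₂ x₁ x₂ y₁ y₂ =
      ε ^ 2 * (α₁ * β₂ - α₂ * β₁) * α₂ ^ 2 * β₂ /
        (α₂ * (α₂ * β₂ + ε ^ 2 * x₁ * y₂)) ^ 2 := by
    rw [hv₂]; unfold d4
    have hden : HasDerivAt (fun t : ℂ => α₂ * (α₂ * β₂ + ε ^ 2 * x₁ * t))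
        (α₂ * (ε ^ 2 * x₁ * 1)) y₂ :=
      (((hasDerivAt_id y₂).const_mul (ε ^ 2 * x₁)).const_add (α₂ * β₂)).const_mul α₂
    have hnum : HasDerivAt (fun t : ℂ => ε ^ 2 * (α₁ * β₂ - α₂ * β₁) * t)
        (ε ^ 2 * (α₁ * β₂ - α₂ * β₁) * 1) y₂ := (hasDerivAt_id y₂).const_mul _
    have h := (hasDerivAt_const y₂ ((β₂ / α₂) * x₂)).add (hnum.div hden hdα)
    erw [h.deriv]
    field_simp; ring
  refine ⟨?_, ?_, ?_, ?_, ?_, ?_⟩ <;>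
    simp only [pb, hd1u₁, hd2u₁, hd3u₁, hd4u₁, hd1u₂, hd2u₂, hd3u₂, hd4u₂,
      hd1v₁, hd2v₁, hd3v₁, hd4v₁, hd1v₂, hd2v₂, hd3v₂, hd4v₂] <;>
    field_simp <;> ring
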